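/- For every positive integer n, the number N of fractions in the Farey sequence of order n satisfies N > 3n²/π² − (n/2)(log n + 2), where log denotes the natural logarithm. -/

import Mathlib

/-- The Farey fractions of order `n`: the rationals in `[0,1]` whose (reduced) denominator
is at most `n`. -/
def fareySet (n : ℕ) : Finset ℚ :=
  ((Finset.range (n + 1) ×ˢ Finset.range (n + 1)).image fun p => (p.1 : ℚ) / (p.2 : ℚ)).filter
    fun q => 0 ≤ q ∧ q ≤ 1 ∧ q.den ≤ n

/-- The Farey sequence of order `n`: the Farey fractions of order `n` listed in
increasing order. -/
def fareyList (n : ℕ) : List ℚ := (fareySet n).sort (· ≤ ·)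

/-- Two reduced fractions `q = a/b` and `q' = a'/b'` are similarly ordered if
`(a' - a) * (b' - b) ≥ 0`. -/
def SimilarlyOrdered (q q' : ℚ) : Prop :=
  0 ≤ (q'.num - q.num) * ((q'.den : ℤ) - (q.den : ℤ))

open Finset ArithmeticFunction
open scoped ArithmeticFunction.Moebius

noncomputable section

/-- the summand -/
private def mf (d : ℕ) : ℝ := (μ d : ℝ) / (d : ℝ) ^ 2

lemma mf_zero : mf 0 = 0 := by simp [mf]

lemma abs_mf_le (d : ℕ) : |mf d| ≤ ((d : ℝ) ^ 2)⁻¹ := by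
  rcases Nat.eq_zero_or_pos d with rfl | hd
  · simp [mf]
  · rw [mf, abs_div, div_le_iff₀ (by positivity)]
    rw [abs_of_nonneg (by positivity : (0:ℝ) ≤ (d:ℝ)^2)]
    rw [inv_mul_cancel₀ (by positivity : ((d:ℝ)^2) ≠ 0)]
    exact_mod_cast ArithmeticFunction.abs_moebius_le_one (n := d)

lemma summable_mf : Summable mf := by
  refine Summable.of_abs (Summable.of_nonneg_of_le (fun d => abs_nonneg _) abs_mf_le ?_)
  simpa using (Real.summable_one_div_nat_pow (p := 2)).mpr one_lt_two

lemma tsum_mf : ∑' d, mf d = 6 / Real.pi ^ 2 := by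
  have h2 : (1 : ℝ) < (2 : ℂ).re := by norm_num
  have hz := LSeries_zeta_mul_Lseries_moebius (s := 2) h2
  rw [LSeries_zeta_eq_riemannZeta h2, riemannZeta_two] at hz
  have hL : LSeries (fun n => (μ n : ℂ)) 2 = ((6 : ℂ) / (Real.pi : ℂ) ^ 2) := by
    have hpi : (Real.pi : ℂ) ≠ 0 := by exact_mod_cast Real.pi_ne_zero
    field_simp at hz ⊢
    linear_combination hz
  have hterm : ∀ n : ℕ, LSeries.term (fun n => (μ n : ℂ)) 2 n = ((mf n : ℝ) : ℂ) := by
    intro n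
    rcases eq_or_ne n 0 with rfl | hn
    · simp [mf]
    · rw [LSeries.term_of_ne_zero hn]
      rw [show ((2:ℂ)) = ((2:ℕ) : ℂ) by norm_num, Complex.cpow_natCast]
      simp only [mf]
      push_cast
      ring
  have : LSeries (fun n => (μ n : ℂ)) 2 = ((∑' d, mf d : ℝ) : ℂ) := by
    rw [LSeries, Complex.ofReal_tsum]
    exact tsum_congr hterm
  rw [this] at hL
  exact_mod_cast hL

lemma invsq_summable : Summable (fun d : ℕ => ((d : ℝ) ^ 2)⁻¹) := by
  simpa using (Real.summable_one_div_nat_pow (p := 2)).mpr one_lt_two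

lemma tail_le (n : ℕ) (hn : 1 ≤ n) :
    ∑' k : ℕ, (((k + (n + 1) : ℕ) : ℝ) ^ 2)⁻¹ ≤ 1 / n := by
  have hsum : Summable (fun k : ℕ => (((k + (n + 1) : ℕ) : ℝ) ^ 2)⁻¹) :=
    (summable_nat_add_iff (f := fun d : ℕ => ((d : ℝ) ^ 2)⁻¹) (n + 1)).mpr invsq_summable
  refine Summable.tsum_le_of_sum_le hsum ?_
  intro s
  obtain ⟨M, hM⟩ := s.exists_nat_subset_range
  have h1 : ∑ k ∈ s, (((k + (n + 1) : ℕ) : ℝ) ^ 2)⁻¹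
      ≤ ∑ k ∈ range M, (((k + (n + 1) : ℕ) : ℝ) ^ 2)⁻¹ := by
    refine Finset.sum_le_sum_of_subset_of_nonneg hM ?_
    intro i _ _; positivity
  have h2 : ∑ k ∈ range M, (((k + (n + 1) : ℕ) : ℝ) ^ 2)⁻¹
      = ∑ i ∈ Ioc n (n + M), ((i : ℝ) ^ 2)⁻¹ := by
    have he : Ioc n (n + M) = Ico (n + 1) (n + 1 + M) := by
      ext x; simp [Finset.mem_Ioc, Finset.mem_Ico]; omega
    rw [he, Finset.sum_Ico_eq_sum_range]
    simp only [add_tsub_cancel_left]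
    refine Finset.sum_congr rfl fun i _ => by rw [add_comm (n+1) i]
  calc ∑ k ∈ s, (((k + (n + 1) : ℕ) : ℝ) ^ 2)⁻¹
      ≤ ∑ i ∈ Ioc n (n + M), ((i : ℝ) ^ 2)⁻¹ := h1.trans_eq h2
    _ ≤ (n : ℝ)⁻¹ - ((n + M : ℕ) : ℝ)⁻¹ :=
        sum_Ioc_inv_sq_le_sub (by omega) (Nat.le_add_right _ _)
    _ ≤ 1 / n := by rw [one_div]; have : (0:ℝ) ≤ ((n + M : ℕ) : ℝ)⁻¹ := by positivity
                    linarith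

lemma sum_mf_ge (n : ℕ) (hn : 1 ≤ n) :
    6 / Real.pi ^ 2 - 1 / n ≤ ∑ d ∈ Icc 1 n, mf d := by
  have hrange : ∑ d ∈ Icc 1 n, mf d = ∑ d ∈ range (n + 1), mf d := by
    refine Finset.sum_subset (fun x hx => ?_) (fun x hx hx' => ?_)
    · simp only [Finset.mem_Icc] at hx; simp only [Finset.mem_range]; omega
    · have : x = 0 := by
        simp only [Finset.mem_range] at hx; simp only [Finset.mem_Icc] at hx'; omega
      simp [this, mf_zero]
  have key := Summable.sum_add_tsum_nat_add (n + 1) summable_mf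
  rw [tsum_mf] at key
  have htail : ∑' k : ℕ, mf (k + (n + 1)) ≤ 1 / n := by
    have hsum : Summable (fun k : ℕ => mf (k + (n + 1))) :=
      (summable_nat_add_iff (f := mf) (n + 1)).mpr summable_mf
    have habs : Summable (fun k : ℕ => |mf (k + (n + 1))|) := hsum.abs
    calc ∑' k : ℕ, mf (k + (n + 1)) ≤ ∑' k : ℕ, |mf (k + (n + 1))| :=
          Summable.tsum_le_tsum (fun k => le_abs_self _) hsum habs
      _ ≤ ∑' k : ℕ, (((k + (n + 1) : ℕ) : ℝ) ^ 2)⁻¹ :=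
          Summable.tsum_le_tsum (fun k => abs_mf_le _) habs
            ((summable_nat_add_iff (f := fun d : ℕ => ((d : ℝ) ^ 2)⁻¹) (n + 1)).mpr invsq_summable)
      _ ≤ 1 / n := tail_le n hn
  rw [hrange]
  linarith

lemma rat_num_den {a b : ℕ} (ha : 1 ≤ a) (hab : a ≤ b) (h : Nat.Coprime a b) :
    ((a : ℚ) / b).num = a ∧ ((a : ℚ) / b).den = b := by
  have hb : (0 : ℤ) < (b : ℤ) := by exact_mod_cast lt_of_lt_of_le ha hab
  have hcop : Nat.Coprime ((a : ℤ)).natAbs ((b : ℤ)).natAbs := by simpa using h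
  have h1 := Rat.num_div_eq_of_coprime hb hcop
  have h2 := Rat.den_div_eq_of_coprime hb hcop
  constructor
  · rw [show ((a : ℚ) / b) = (((a : ℤ) : ℚ) / ((b : ℤ) : ℚ)) by push_cast; ring]
    exact h1
  · have : ((((a : ℤ) : ℚ) / ((b : ℤ) : ℚ)).den : ℤ) = (b : ℤ) := h2
    rw [show ((a : ℚ) / b) = (((a : ℤ) : ℚ) / ((b : ℤ) : ℚ)) by push_cast; ring]
    exact_mod_cast this

private def fareyAux (n : ℕ) : Finset ℚ :=
  (Icc 1 n).biUnion
    (fun b => ((Icc 1 b).filter (fun a => Nat.Coprime a b)).image (fun a : ℕ => (a : ℚ) / (b : ℚ)))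

lemma mem_fareyAux {n : ℕ} {q : ℚ} (hq : q ∈ fareyAux n) :
    ∃ a b : ℕ, 1 ≤ a ∧ a ≤ b ∧ b ≤ n ∧ Nat.Coprime a b ∧ q = (a : ℚ) / b ∧
      q.num = a ∧ q.den = b := by
  simp only [fareyAux, Finset.mem_biUnion, Finset.mem_image, Finset.mem_filter,
    Finset.mem_Icc] at hq
  obtain ⟨b, ⟨hb1, hbn⟩, a, ⟨⟨ha1, hab⟩, hcop⟩, rfl⟩ := hq
  obtain ⟨h1, h2⟩ := rat_num_den ha1 hab hcop
  exact ⟨a, b, ha1, hab, hbn, hcop, rfl, h1, h2⟩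

lemma fareyAux_card (n : ℕ) :
    (fareyAux n).card = ∑ b ∈ Icc 1 n, ((Icc 1 b).filter (fun a => Nat.Coprime a b)).card := by
  rw [fareyAux, Finset.card_biUnion]
  · refine Finset.sum_congr rfl fun b hb => ?_
    simp only [Finset.mem_Icc] at hb
    refine Finset.card_image_of_injOn fun a ha a' ha' hqq => ?_
    simp only [Finset.mem_coe, Finset.mem_filter, Finset.mem_Icc] at ha ha'
    have e1 := (rat_num_den ha.1.1 ha.1.2 ha.2).1
    have e2 := (rat_num_den ha'.1.1 ha'.1.2 ha'.2).1
    rw [hqq] at e1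
    exact_mod_cast e1.symm.trans e2
  · intro x hx y hy hxy
    simp only [Finset.mem_coe, Finset.mem_Icc] at hx hy
    refine Finset.disjoint_left.mpr fun q hqx hqy => ?_
    simp only [Finset.mem_image, Finset.mem_filter, Finset.mem_Icc] at hqx hqy
    obtain ⟨a, ⟨⟨ha1, hax⟩, hcopa⟩, rfl⟩ := hqx
    obtain ⟨c, ⟨⟨hc1, hcy⟩, hcopc⟩, he⟩ := hqy
    have d1 := (rat_num_den ha1 hax hcopa).2
    have d2 := (rat_num_den hc1 hcy hcopc).2
    rw [he] at d2
    exact hxy (d1.symm.trans d2)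

lemma zero_notMem_fareyAux (n : ℕ) : 0 ∉ fareyAux n := by
  intro h
  obtain ⟨a, b, ha1, -, -, -, -, hnum, -⟩ := mem_fareyAux h
  simp only [Rat.num_ofNat] at hnum
  omega

lemma moebius_divisor_sum (g : ℕ) (hg : g ≠ 0) :
    ∑ d ∈ g.divisors, μ d = if g = 1 then 1 else 0 := by
  have h := congrFun (congrArg (fun f : ArithmeticFunction ℤ => (f : ℕ → ℤ))
    (ArithmeticFunction.coe_moebius_mul_coe_zeta (R := ℤ))) g
  simp only [ArithmeticFunction.coe_mul_zeta_apply, ArithmeticFunction.one_apply,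
    ArithmeticFunction.intCoe_apply, Int.cast_id] at h
  exact h
lemma coprime_ite_eq {a b n : ℕ} (ha : 1 ≤ a) (hab : a ≤ b) (hbn : b ≤ n) :
    (if Nat.Coprime a b then (1 : ℤ) else 0) =
      ∑ d ∈ Icc 1 n, if d ∣ a ∧ d ∣ b then μ d else 0 := by
  have hb : 1 ≤ b := le_trans ha hab
  have hg0 : 0 < Nat.gcd a b := Nat.gcd_pos_of_pos_left b (by omega)
  have hgn : Nat.gcd a b ≤ n :=
    le_trans (Nat.le_of_dvd (by omega) (Nat.gcd_dvd_right a b)) hbn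
  have hset : (Icc 1 n).filter (fun d => d ∣ a ∧ d ∣ b) = (Nat.gcd a b).divisors := by
    ext d
    simp only [Finset.mem_filter, Finset.mem_Icc, Nat.mem_divisors]
    constructor
    · rintro ⟨⟨-, -⟩, hda, hdb⟩
      exact ⟨Nat.dvd_gcd hda hdb, by omega⟩
    · rintro ⟨hdg, -⟩
      have hd0 : d ≠ 0 := by rintro rfl; omega
      refine ⟨⟨by omega, le_trans (Nat.le_of_dvd hg0 hdg) hgn⟩,
        hdg.trans (Nat.gcd_dvd_left a b), hdg.trans (Nat.gcd_dvd_right a b)⟩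
  rw [← Finset.sum_filter, hset, moebius_divisor_sum _ (by omega)]

lemma reindex_multiples (n d : ℕ) (hd : 1 ≤ d) (f : ℕ → ℤ) :
    ∑ b ∈ (Icc 1 n).filter (fun b => d ∣ b), f (b / d) = ∑ b' ∈ Icc 1 (n / d), f b' := by
  refine Finset.sum_nbij' (fun b => b / d) (fun b' => d * b') ?_ ?_ ?_ ?_ ?_
  · intro b hb
    simp only [Finset.mem_filter, Finset.mem_Icc] at hb
    obtain ⟨⟨hb1, hbn⟩, hdb⟩ := hb
    simp only [Finset.mem_Icc]
    have hdleb : d ≤ b := Nat.le_of_dvd (by omega) hdb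
    exact ⟨(Nat.one_le_div_iff (by omega)).mpr hdleb, Nat.div_le_div_right hbn⟩
  · intro b' hb'
    simp only [Finset.mem_Icc] at hb'
    simp only [Finset.mem_filter, Finset.mem_Icc]
    refine ⟨⟨by nlinarith, ?_⟩, dvd_mul_right d b'⟩
    exact (Nat.le_div_iff_mul_le (by omega)).mp hb'.2 |>.trans_eq' (by ring_nf)
  · intro b hb
    simp only [Finset.mem_filter, Finset.mem_Icc] at hb
    exact Nat.mul_div_cancel' hb.2
  · intro b' _
    exact Nat.mul_div_cancel_left b' (by omega)
  · intro b _
    rfl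

lemma inner_sum_eq (n d b : ℕ) (hd : 1 ≤ d) (hb : 1 ≤ b) :
    (∑ a ∈ Icc 1 b, if d ∣ a ∧ d ∣ b then (μ d : ℤ) else 0)
      = if d ∣ b then (μ d : ℤ) * ((b / d : ℕ) : ℤ) else 0 := by
  by_cases hdb : d ∣ b
  · simp only [hdb, and_true, if_true]
    rw [← Finset.sum_filter, Finset.sum_const, nsmul_eq_mul]
    have : (Icc 1 b).filter (fun a => d ∣ a) = (Ioc 0 b).filter (fun a => d ∣ a) := by
      have hI : Icc 1 b = Ioc 0 b := by
        ext x
        simp only [Finset.mem_Icc, Finset.mem_Ioc]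
        omega
      rw [hI]
    rw [this, Nat.Ioc_filter_dvd_card_eq_div]
    ring
  · simp [hdb]

lemma count_identity (n : ℕ) :
    (∑ b ∈ Icc 1 n, (((Icc 1 b).filter (fun a => Nat.Coprime a b)).card : ℤ))
      = ∑ d ∈ Icc 1 n, μ d * ∑ b' ∈ Icc 1 (n / d), (b' : ℤ) := by
  have step1 : ∀ b ∈ Icc 1 n, (((Icc 1 b).filter (fun a => Nat.Coprime a b)).card : ℤ)
      = ∑ d ∈ Icc 1 n, ∑ a ∈ Icc 1 b, (if d ∣ a ∧ d ∣ b then (μ d : ℤ) else 0) := by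
    intro b hb
    simp only [Finset.mem_Icc] at hb
    rw [Finset.card_filter]
    push_cast
    rw [Finset.sum_comm]
    refine Finset.sum_congr rfl fun a ha => ?_
    simp only [Finset.mem_Icc] at ha
    simpa using coprime_ite_eq ha.1 ha.2 hb.2
  rw [Finset.sum_congr rfl step1, Finset.sum_comm]
  refine Finset.sum_congr rfl fun d hd => ?_
  simp only [Finset.mem_Icc] at hd
  have : ∀ b ∈ Icc 1 n, (∑ a ∈ Icc 1 b, if d ∣ a ∧ d ∣ b then (μ d : ℤ) else 0)
      = if d ∣ b then (μ d : ℤ) * ((b / d : ℕ) : ℤ) else 0 := by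
    intro b hb
    simp only [Finset.mem_Icc] at hb
    exact inner_sum_eq n d b hd.1 hb.1
  rw [Finset.sum_congr rfl this, ← Finset.sum_filter, ← Finset.mul_sum]
  congr 1
  exact reindex_multiples n d hd.1 (fun m => (m : ℤ))

lemma farey_card_ge' (n : ℕ) (hn : 1 ≤ n) :
    1 + ∑ b ∈ Icc 1 n, ((Icc 1 b).filter (fun a => Nat.Coprime a b)).card
      ≤ (fareySet n).card := by
  have hsub : insert (0 : ℚ) (fareyAux n) ⊆ fareySet n := by
    intro q hq
    rcases Finset.mem_insert.mp hq with rfl | hq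
    · simp only [fareySet, Finset.mem_filter, Finset.mem_image, Finset.mem_product]
      refine ⟨⟨(0, 1), ?_, by norm_num⟩, le_refl 0, by norm_num, by simp; omega⟩
      simp only [Finset.mem_product, Finset.mem_range]
      omega
    · obtain ⟨a, b, ha1, hab, hbn, hcop, rfl, hnum, hden⟩ := mem_fareyAux hq
      have hb1 : 1 ≤ b := le_trans ha1 hab
      have hbR : (0 : ℝ) < b := by exact_mod_cast hb1
      simp only [fareySet, Finset.mem_filter, Finset.mem_image, Finset.mem_product]
      refine ⟨⟨(a, b), ?_, rfl⟩, ?_, ?_, ?_⟩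
      · simp only [Finset.mem_product, Finset.mem_range]
        omega
      · positivity
      · rw [div_le_one (by exact_mod_cast hb1 : (0:ℚ) < b)]
        exact_mod_cast hab
      · rw [hden]; exact hbn
  calc 1 + ∑ b ∈ Icc 1 n, ((Icc 1 b).filter (fun a => Nat.Coprime a b)).card
      = (insert (0 : ℚ) (fareyAux n)).card := by
        rw [Finset.card_insert_of_notMem (zero_notMem_fareyAux n), fareyAux_card]
        omega
    _ ≤ (fareySet n).card := Finset.card_le_card hsub

lemma gauss_real (m : ℕ) : ((∑ b' ∈ Icc 1 m, (b' : ℤ) : ℤ) : ℝ) = m * (m + 1) / 2 := by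
  induction m with
  | zero => simp
  | succ k ih =>
    rw [Finset.sum_Icc_succ_top (by omega : 1 ≤ k + 1)]
    push_cast at ih ⊢
    linarith

lemma term_bound (n d : ℕ) (hn : 1 ≤ n) (hd1 : 1 ≤ d) :
    (μ d : ℝ) * ((n : ℝ) / d) ^ 2 / 2 - ((n : ℝ) / d) / 2
      ≤ (μ d : ℝ) * (((n / d : ℕ) : ℝ) * (((n / d : ℕ) : ℝ) + 1) / 2) := by
  set m : ℕ := n / d with hm
  set x : ℝ := (n : ℝ) / d with hx
  have hdR : (0 : ℝ) < d := by exact_mod_cast hd1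
  have hx0 : 0 ≤ x := by positivity
  have hm0 : (0 : ℝ) ≤ (m : ℝ) := by positivity
  have h1 : (m : ℝ) ≤ x := by
    rw [hx, le_div_iff₀ hdR]
    exact_mod_cast Nat.div_mul_le_self n d
  have h2 : x < (m : ℝ) + 1 := by
    rw [hx, div_lt_iff₀ hdR]
    have hr1 : d * m + n % d = n := by rw [hm]; exact Nat.div_add_mod n d
    have hr2 : n % d < d := Nat.mod_lt n (by omega)
    have hc1 : (n : ℝ) = (d : ℝ) * (m : ℝ) + ((n % d : ℕ) : ℝ) := by exact_mod_cast hr1.symm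
    have hc2 : ((n % d : ℕ) : ℝ) < (d : ℝ) := by exact_mod_cast hr2
    nlinarith
  have hmu : μ d = -1 ∨ μ d = 0 ∨ μ d = 1 := by
    have := abs_le.mp (ArithmeticFunction.abs_moebius_le_one (n := d))
    omega
  rcases hmu with h | h | h <;> rw [h] <;> push_cast <;>
    nlinarith [mul_nonneg hm0 (by linarith : (0:ℝ) ≤ (m:ℝ) + 1 - x),
      mul_nonneg hx0 (by linarith : (0:ℝ) ≤ (m:ℝ) + 1 - x),
      mul_nonneg (by linarith : (0:ℝ) ≤ x - m) (by linarith : (0:ℝ) ≤ (m:ℝ) + 1),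
      mul_nonneg hx0 (by linarith : (0:ℝ) ≤ x - m)]

/-- For every positive integer `n`, the number `N` of fractions in the Farey sequence of
order `n` satisfies `N > 3n²/π² − (n/2)(log n + 2)`. -/
theorem farey_card_explicit_lower_bound (n : ℕ) (hn : 1 ≤ n) :
    3 * (n : ℝ) ^ 2 / Real.pi ^ 2 - (n : ℝ) / 2 * (Real.log n + 2) <
      ((fareySet n).card : ℝ) := by
  have hnR : (1 : ℝ) ≤ (n : ℝ) := by exact_mod_cast hn
  have hn0 : (n : ℝ) ≠ 0 := by linarith
  have hπ : Real.pi ≠ 0 := Real.pi_ne_zero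
  have hKcast : (1 : ℝ) +
      ((∑ b ∈ Icc 1 n, ((Icc 1 b).filter (fun a => Nat.Coprime a b)).card : ℕ) : ℝ)
      ≤ ((fareySet n).card : ℝ) := by exact_mod_cast farey_card_ge' n hn
  have hsum_eq : ((∑ b ∈ Icc 1 n, ((Icc 1 b).filter (fun a => Nat.Coprime a b)).card : ℕ) : ℝ)
      = ∑ d ∈ Icc 1 n, (μ d : ℝ) * (((n / d : ℕ) : ℝ) * (((n / d : ℕ) : ℝ) + 1) / 2) := by
    have h1 : ((∑ b ∈ Icc 1 n, ((Icc 1 b).filter (fun a => Nat.Coprime a b)).card : ℕ) : ℤ)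
        = ∑ d ∈ Icc 1 n, μ d * ∑ b' ∈ Icc 1 (n / d), (b' : ℤ) := by
      rw [← count_identity n]; push_cast; rfl
    calc ((∑ b ∈ Icc 1 n, ((Icc 1 b).filter (fun a => Nat.Coprime a b)).card : ℕ) : ℝ)
        = ((∑ d ∈ Icc 1 n, μ d * ∑ b' ∈ Icc 1 (n / d), (b' : ℤ) : ℤ) : ℝ) := by
          exact_mod_cast congrArg (fun z : ℤ => (z : ℝ)) h1
      _ = ∑ d ∈ Icc 1 n, (μ d : ℝ) * ((∑ b' ∈ Icc 1 (n / d), (b' : ℤ) : ℤ) : ℝ) := by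
          push_cast; rfl
      _ = _ := Finset.sum_congr rfl fun d _ => by rw [gauss_real]
  have hterm : ∑ d ∈ Icc 1 n, ((μ d : ℝ) * ((n : ℝ) / d) ^ 2 / 2 - ((n : ℝ) / d) / 2)
      ≤ ∑ d ∈ Icc 1 n, (μ d : ℝ) * (((n / d : ℕ) : ℝ) * (((n / d : ℕ) : ℝ) + 1) / 2) := by
    refine Finset.sum_le_sum fun d hd => ?_
    exact term_bound n d hn (Finset.mem_Icc.mp hd).1
  have hsplit : ∑ d ∈ Icc 1 n, ((μ d : ℝ) * ((n : ℝ) / d) ^ 2 / 2 - ((n : ℝ) / d) / 2)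
      = (n : ℝ) ^ 2 / 2 * (∑ d ∈ Icc 1 n, mf d)
        - (n : ℝ) / 2 * (∑ d ∈ Icc 1 n, ((d : ℝ))⁻¹) := by
    rw [Finset.mul_sum, Finset.mul_sum, ← Finset.sum_sub_distrib]
    refine Finset.sum_congr rfl fun d hd => ?_
    have hd1 : (1 : ℝ) ≤ (d : ℝ) := by exact_mod_cast (Finset.mem_Icc.mp hd).1
    have hd0 : (d : ℝ) ≠ 0 := by linarith
    rw [mf]
    field_simp
  have hharm : ∑ d ∈ Icc 1 n, ((d : ℝ))⁻¹ ≤ 1 + Real.log n := by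
    have h := harmonic_le_one_add_log n
    rw [harmonic_eq_sum_Icc] at h
    have : ((∑ i ∈ Icc 1 n, ((i : ℚ))⁻¹ : ℚ) : ℝ) = ∑ d ∈ Icc 1 n, ((d : ℝ))⁻¹ := by
      push_cast; rfl
    rw [this] at h
    exact h
  have hmf := sum_mf_ge n hn
  have e1 : (n : ℝ) ^ 2 / 2 * (6 / Real.pi ^ 2 - 1 / n)
      ≤ (n : ℝ) ^ 2 / 2 * (∑ d ∈ Icc 1 n, mf d) :=
    mul_le_mul_of_nonneg_left hmf (by positivity)
  have e2 : (n : ℝ) / 2 * (∑ d ∈ Icc 1 n, ((d : ℝ))⁻¹) ≤ (n : ℝ) / 2 * (1 + Real.log n) :=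
    mul_le_mul_of_nonneg_left hharm (by positivity)
  have e3 : (n : ℝ) ^ 2 / 2 * (6 / Real.pi ^ 2 - 1 / n)
      = 3 * (n : ℝ) ^ 2 / Real.pi ^ 2 - (n : ℝ) / 2 := by
    field_simp
    ring
  nlinarith [hKcast, hsum_eq, hterm, hsplit, e1, e2, e3]
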